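/- arXiv:1210.1386 — 3 statements merged into one kernel-verified Lean document; each statement's English description precedes it below -/
import Mathlib

section
/- Let $X$ be a compact metric space, let $n \geq 0$, and suppose that for every finite open cover $\mathcal{U}$ of $X$ and every $\epsilon > 0$ there exist continuous functions $b_j^{(i)} : X \to [0,\infty)$ for $i = 0, \dots, n$ and $j = 1, \dots, r$ such that: (a) for each $i$, the functions $b_1^{(i)}, \dots, b_r^{(i)}$ have pairwise disjoint supports; (b) each $b_j^{(i)}$ is supported in some member of $\mathcal{U}$; (c) $\|\sum_{i,j} b_j^{(i)} - 1\|_\infty \leq \epsilon$. Then the covering dimension of $X$ is at most $n$. -/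
/-- Covering dimension at most `n`: every finite open cover admits a finite open
refinement in which no point lies in more than `n+1` members. -/
def CovDimLE (X : Type*) [TopologicalSpace X] (n : ℕ) : Prop :=
  ∀ (N : ℕ) (U : Fin N → Set X), (∀ i, IsOpen (U i)) → (⋃ i, U i) = Set.univ →
    ∃ (M : ℕ) (V : Fin M → Set X),
      (∀ k, IsOpen (V k)) ∧ (⋃ k, V k) = Set.univ ∧
      (∀ k, ∃ i, V k ⊆ U i) ∧
      ∀ x : X, ({k | x ∈ V k} : Set (Fin M)).ncard ≤ n + 1

/-- If every finite open cover of `X` admits `(n+1)`-colourable approximate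
finite partitions of unity subordinate to it, then `dim X ≤ n`. -/
theorem covdim_of_colourable_partitions {X : Type*} [MetricSpace X] [CompactSpace X]
    (n : ℕ)
    (H : ∀ (N : ℕ) (U : Fin N → Set X), (∀ i, IsOpen (U i)) → (⋃ i, U i) = Set.univ →
      ∀ ε : ℝ, 0 < ε →
        ∃ (r : ℕ) (b : Fin (n + 1) → Fin r → C(X, ℝ)),
          (∀ i j y, 0 ≤ b i j y) ∧
          (∀ i j j', j ≠ j' → ∀ y, b i j y * b i j' y = 0) ∧
          (∀ i j, ∃ l, ∀ y, y ∉ U l → b i j y = 0) ∧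
          (∀ y, |(∑ i, ∑ j, b i j y) - 1| ≤ ε)) :
    CovDimLE X n := by
  intro N U hUo hUc
  obtain ⟨r, b, hnn, hdisj, hsupp, happ⟩ := H N U hUo hUc (1/2) (by norm_num)
  refine ⟨(n+1)*r, fun k => {x | 0 < b (finProdFinEquiv.symm k).1 (finProdFinEquiv.symm k).2 x},
    fun k => ?_, ?_, fun k => ?_, fun x => ?_⟩
  · exact isOpen_lt continuous_const (b _ _).continuous
  · ext x
    simp only [Set.mem_iUnion, Set.mem_univ, iff_true, Set.mem_setOf_eq]
    by_contra hc
    push_neg at hc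
    have hall : ∀ i j, b i j x = 0 := by
      intro i j
      have := hc (finProdFinEquiv (i, j))
      simp only [Equiv.symm_apply_apply] at this
      exact le_antisymm this (hnn i j x)
    have h0 : (∑ i, ∑ j, b i j x) = 0 := by
      simp [hall]
    have := happ x
    rw [h0] at this
    norm_num at this
  · obtain ⟨l, hl⟩ := hsupp (finProdFinEquiv.symm k).1 (finProdFinEquiv.symm k).2
    refine ⟨l, fun x hx => ?_⟩
    by_contra hxl
    have := hl x hxl
    simp only [Set.mem_setOf_eq] at hx
    rw [this] at hx
    exact lt_irrefl 0 hx
  · have hinj : Set.InjOn (fun k : Fin ((n+1)*r) => (finProdFinEquiv.symm k).1)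
        {k | x ∈ {x | 0 < b (finProdFinEquiv.symm k).1 (finProdFinEquiv.symm k).2 x}} := by
      intro k hk k' hk' heq
      dsimp only at heq
      simp only [Set.mem_setOf_eq] at hk hk'
      by_cases hj : (finProdFinEquiv.symm k).2 = (finProdFinEquiv.symm k').2
      · have : finProdFinEquiv.symm k = finProdFinEquiv.symm k' := Prod.ext heq hj
        exact finProdFinEquiv.symm.injective this
      · exfalso
        have := hdisj (finProdFinEquiv.symm k).1 (finProdFinEquiv.symm k).2
          (finProdFinEquiv.symm k').2 hj x
        rw [heq] at hk this
        nlinarith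
    calc ({k | x ∈ {x | 0 < b (finProdFinEquiv.symm k).1 (finProdFinEquiv.symm k).2 x}}).ncard
        ≤ (Set.univ : Set (Fin (n+1))).ncard :=
          Set.ncard_le_ncard_of_injOn _ (fun a _ => Set.mem_univ _) hinj Set.finite_univ
      _ = n + 1 := by simp [Set.ncard_univ]
end

section
/- Let $X$ be a compact metric space, $\mathcal{U}$ a finite open cover, $(x_U)_{U \in \mathcal{U}}$ chosen points $x_U \in U$, and $(a_U)_{U \in \mathcal{U}}$ continuous functions $X \to [0,1]$ with $a_U$ vanishing outside $U$ and $\|1 - \sum_U a_U\|_\infty \leq \epsilon/2$. Define $\psi : C(X) \to \mathbb{C}^{\mathcal{U}}$ by $\psi(f) = (f(x_U))_U$ and $\phi : \mathbb{C}^{\mathcal{U}} \to C(X)$ by $\phi((\lambda_U)_U) = \sum_U \lambda_U a_U$. Then $\psi$ is a unital $*$-homomorphism, $\phi$ is a positive linear map with $\|\phi\| \leq \max(1, \|\sum_U a_U\|_\infty)$, and for every $f \in C(X)$ with $\|f\| \leq 1$ such that $|f(x) - f(x_U)| < \epsilon/2$ for all $U$ and $x \in U$, one has $\|\phi(\psi(f))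 - f\|_\infty < \epsilon$. -/
/-- The commutative decomposition-rank factorization of Proposition 3.2
(iv) ⇒ (iii): point evaluations `ψ` and a subordinate approximate partition of
unity `φ` give a factorization of the identity of `C(X)` through `ℝ^𝒰`. -/
theorem commutative_factorization {X : Type*} [MetricSpace X] [CompactSpace X]
    (r : ℕ) (U : Fin r → Set X) (hUopen : ∀ j, IsOpen (U j))
    (hUcover : (⋃ j, U j) = Set.univ)
    (x : Fin r → X) (hx : ∀ j, x j ∈ U j)
    (a : Fin r → C(X, ℝ)) (ha01 : ∀ j, ∀ y, a j y ∈ Set.Icc (0:ℝ) 1)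
    (hsupp : ∀ j, ∀ y, y ∉ U j → a j y = 0)
    (ε : ℝ) (hε : 0 < ε)
    (hclose : ‖(1 : C(X, ℝ)) - ∑ j, a j‖ ≤ ε / 2)
    (hle1 : ∀ y, ∑ j, a j y ≤ 1) :
    ∃ ψ : C(X, ℝ) →⋆ₐ[ℝ] (Fin r → ℝ),
      (∀ f j, ψ f j = f (x j)) ∧
      (∀ lam : Fin r → ℝ, (∀ j, 0 ≤ lam j) → ∀ y, 0 ≤ ∑ j, lam j * a j y) ∧
      (∀ lam : Fin r → ℝ,
        ‖∑ j, lam j • a j‖ ≤ max 1 ‖∑ j, a j‖ * ‖lam‖) ∧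
      (∀ f : C(X, ℝ), ‖f‖ ≤ 1 →
        (∀ j, ∀ y ∈ U j, |f y - f (x j)| < ε / 2) →
        ‖(∑ j, f (x j) • a j) - f‖ < ε) := by
  refine ⟨{ toFun := fun f j => f (x j)
            map_one' := rfl
            map_mul' := fun f g => rfl
            map_zero' := rfl
            map_add' := fun f g => rfl
            commutes' := fun c => rfl
            map_star' := fun f => rfl }, fun f j => rfl, ?_, ?_, ?_⟩
  · intro lam hlam y
    exact Finset.sum_nonneg fun j _ =>
      mul_nonneg (hlam j) (ha01 j y).1
  · intro lam
    have hM : (0:ℝ) ≤ max 1 ‖∑ j, a j‖ * ‖lam‖ :=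
      mul_nonneg (le_trans zero_le_one (le_max_left _ _)) (norm_nonneg _)
    refine ContinuousMap.norm_le _ hM |>.2 fun y => ?_
    have h1 : ((∑ j, lam j • a j : C(X, ℝ)) y) = ∑ j, lam j * a j y := by
      simp [ContinuousMap.sum_apply]
    rw [Real.norm_eq_abs, h1]
    calc |∑ j, lam j * a j y| ≤ ∑ j, |lam j * a j y| := Finset.abs_sum_le_sum_abs _ _
      _ ≤ ∑ j, ‖lam‖ * a j y := by
          refine Finset.sum_le_sum fun j _ => ?_
          rw [abs_mul, abs_of_nonneg (ha01 j y).1]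
          exact mul_le_mul_of_nonneg_right (norm_le_pi_norm lam j) (ha01 j y).1
      _ = ‖lam‖ * ∑ j, a j y := by rw [Finset.mul_sum]
      _ ≤ ‖lam‖ * ‖∑ j, a j‖ := by
          refine mul_le_mul_of_nonneg_left ?_ (norm_nonneg _)
          have := ContinuousMap.norm_coe_le_norm (∑ j, a j) y
          rw [Real.norm_eq_abs] at this
          calc ∑ j, a j y = (∑ j, a j : C(X, ℝ)) y := by simp [ContinuousMap.sum_apply]
            _ ≤ |(∑ j, a j : C(X, ℝ)) y| := le_abs_self _
            _ ≤ ‖∑ j, a j‖ := this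
      _ ≤ max 1 ‖∑ j, a j‖ * ‖lam‖ := by
          rw [mul_comm]
          exact mul_le_mul_of_nonneg_right (le_max_right _ _) (norm_nonneg _)
  · intro f hf1 hfcl
    rw [ContinuousMap.norm_lt_iff _ hε]
    intro y
    have hval : ((∑ j, f (x j) • a j) - f : C(X, ℝ)) y
        = ∑ j, (f (x j) - f y) * a j y + f y * ((∑ j, a j y) - 1) := by
      simp only [ContinuousMap.sub_apply, ContinuousMap.sum_apply,
        ContinuousMap.smul_apply, smul_eq_mul]
      rw [show ∀ g : Fin r → ℝ, ∑ j, (f (x j) - f y) * g j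
          = ∑ j, f (x j) * g j - f y * ∑ j, g j from fun g => by
        rw [Finset.mul_sum, ← Finset.sum_sub_distrib]; exact Finset.sum_congr rfl fun j _ => by ring]
      ring
    have hsum_close : |(∑ j, a j y) - 1| ≤ ε / 2 := by
      have := ContinuousMap.norm_coe_le_norm ((1 : C(X, ℝ)) - ∑ j, a j) y
      simp only [ContinuousMap.sub_apply, ContinuousMap.one_apply,
        ContinuousMap.sum_apply, Real.norm_eq_abs] at this
      rw [abs_sub_comm]
      exact this.trans hclose
    have hfy : |f y| ≤ 1 := by
      have := ContinuousMap.norm_coe_le_norm f y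
      rw [Real.norm_eq_abs] at this; exact this.trans hf1
    have key : |∑ j, (f (x j) - f y) * a j y| < ε / 2 ∨
        (∑ j, (f (x j) - f y) * a j y) = 0 := by
      by_cases hz : ∀ j, a j y = 0
      · right; simp [hz]
      · left
        push_neg at hz
        obtain ⟨j₀, hj₀⟩ := hz
        have hj₀pos : 0 < a j₀ y := lt_of_le_of_ne (ha01 j₀ y).1 (Ne.symm hj₀)
        have hterm : ∀ j, |(f (x j) - f y) * a j y| ≤ ε / 2 * a j y := by
          intro j
          rcases eq_or_lt_of_le (ha01 j y).1 with h | h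
          · rw [← h]; simp
          · have hyU : y ∈ U j := by
              by_contra hy
              exact absurd (hsupp j y hy) (ne_of_gt h)
            have := hfcl j y hyU
            rw [abs_mul, abs_of_nonneg (ha01 j y).1, abs_sub_comm]
            exact mul_le_mul_of_nonneg_right this.le (ha01 j y).1
        calc |∑ j, (f (x j) - f y) * a j y| ≤ ∑ j, |(f (x j) - f y) * a j y| :=
              Finset.abs_sum_le_sum_abs _ _
          _ < ∑ j, ε / 2 * a j y := by
              refine Finset.sum_lt_sum (fun j _ => hterm j) ⟨j₀, Finset.mem_univ _, ?_⟩
              have hyU : y ∈ U j₀ := by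
                by_contra hy
                exact absurd (hsupp j₀ y hy) hj₀
              have := hfcl j₀ y hyU
              rw [abs_mul, abs_of_nonneg (ha01 j₀ y).1, abs_sub_comm]
              exact mul_lt_mul_of_pos_right this hj₀pos
          _ = ε / 2 * ∑ j, a j y := by rw [Finset.mul_sum]
          _ ≤ ε / 2 * 1 := mul_le_mul_of_nonneg_left (hle1 y) (by linarith)
          _ = ε / 2 := mul_one _
    have hsecond : |f y * ((∑ j, a j y) - 1)| ≤ ε / 2 := by
      rw [abs_mul]
      calc |f y| * |(∑ j, a j y) - 1| ≤ 1 * (ε / 2) :=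
            mul_le_mul hfy hsum_close (abs_nonneg _) zero_le_one
        _ = ε / 2 := one_mul _
    rw [Real.norm_eq_abs, hval]
    rcases key with h | h
    · calc |∑ j, (f (x j) - f y) * a j y + f y * ((∑ j, a j y) - 1)|
          ≤ |∑ j, (f (x j) - f y) * a j y| + |f y * ((∑ j, a j y) - 1)| := abs_add_le _ _
        _ < ε / 2 + ε / 2 := by linarith
        _ = ε := by ring
    · rw [h, zero_add]
      calc |f y * ((∑ j, a j y) - 1)| ≤ ε / 2 := hsecond
        _ < ε := by linarith
end

section
/- Let $Y$ be a compact metric space and suppose $C(Y)$ (continuous complex-valued functions) contains a unital subalgebra isomorphic to $C(X)$ for a compact metric space $X$ (i.e., there is a unital injective $*$-homomorphism $C(X) \to C(Y)$). If $Y$ has covering dimension at most $n$, then the inclusion $C(X) \hookrightarrow C(Y)$ admits, for every finite set $\mathcal{F} \subset C(X)$ and $\epsilon > 0$, a factorization $C(X) \xrightarrow{\psi} F \xrightarrow{\phi} C(Y)$ with $F$ a finite-dimensional commutative C*-algebra, $\psi$ a unital $*$-homomorphism, $\phi$ positive contractive and $(n+1)$-colourable (i.e., $F = F^{(0)} \oplus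 \cdots \oplus F^{(n)}$ and $\phi|_{F^{(i)}}$ maps orthogonal elements to orthogonal elements), such that $\|\phi(\psi(f)) - f\| < \epsilon$ for all $f \in \mathcal{F}$. -/
open scoped ComplexOrder

open Set Function


/-- Sum over `Fin (n+1)` of an indicator-style `if`. -/
lemma sum_if_card (n c : ℕ) (a : ℝ) (h0 : ¬(1 ≤ c ∧ c ≤ n + 1) → a = 0) :
    (∑ i : Fin (n + 1), if c = (i : ℕ) + 1 then a else 0) = a := by
  by_cases hc : 1 ≤ c ∧ c ≤ n + 1
  · set i₀ : Fin (n + 1) := ⟨c - 1, by omega⟩ with hi₀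
    rw [Finset.sum_eq_single i₀]
    · simp only [hi₀]
      rw [if_pos]
      omega
    · intro i _ hi
      rw [if_neg]
      intro hci
      apply hi
      apply Fin.ext
      simp only [hi₀]
      omega
    · intro hmem
      exact absurd (Finset.mem_univ i₀) hmem
  · rw [h0 hc, Finset.sum_eq_zero]
    intro i _
    rw [if_neg]
    intro hci
    have := i.isLt
    omega

/-- Colored partition of unity from a finite open cover of multiplicity `≤ n+1`. -/
lemma colored_pou {Y : Type*} [MetricSpace Y] [CompactSpace Y] [Nonempty Y]
    (n M : ℕ) (V : Fin M → Set Y)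
    (hVo : ∀ k, IsOpen (V k)) (hVc : (⋃ k, V k) = Set.univ)
    (hmul : ∀ y : Y, ({k | y ∈ V k} : Set (Fin M)).ncard ≤ n + 1) :
    ∃ (r : ℕ) (h : Fin (n + 1) → Fin r → C(Y, ℝ)) (pt : Fin (n + 1) → Fin r → Y),
      (∀ i k y, 0 ≤ h i k y) ∧
      (∀ y, ∑ i, ∑ k, h i k y = 1) ∧
      (∀ i k k', k ≠ k' → ∀ y, h i k y * h i k' y = 0) ∧
      (∀ i k y, h i k y ≠ 0 → ∃ j, y ∈ V j ∧ pt i k ∈ V j) := by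
  classical
  -- first partition of unity subordinate to V
  obtain ⟨f, hf⟩ := PartitionOfUnity.exists_isSubordinate isClosed_univ V hVo
    (by rw [hVc])
  have hsum : ∀ y : Y, ∑ k, f k y = 1 := by
    intro y
    have := f.sum_eq_one (mem_univ y)
    rwa [finsum_eq_sum_of_fintype] at this
  have hsupp : ∀ (k : Fin M) (y : Y), f k y ≠ 0 → y ∈ V k := fun k y hy =>
    hf k (subset_closure (mem_support.2 hy))
  -- sets W S
  set W : Finset (Fin M) → Set Y := fun S =>
    ({y | 0 < ∑ j ∈ S, f j y} ∩ ⋂ j : Fin M, (if j ∈ S then {y | 0 < f j y} else univ)) ∩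
      ⋂ p : Fin M × Fin M,
        (if p.1 ∈ S ∧ p.2 ∉ S then {y | f p.2 y < f p.1 y} else univ) with hW
  have hWmem : ∀ (S : Finset (Fin M)) (y : Y), y ∈ W S ↔
      (0 < ∑ j ∈ S, f j y) ∧ (∀ j ∈ S, 0 < f j y) ∧
        (∀ j ∈ S, ∀ l ∉ S, f l y < f j y) := by
    intro S y
    simp only [hW, Set.mem_inter_iff, Set.mem_iInter, Set.mem_setOf_eq,
      Set.mem_ite_univ_right, Prod.forall, and_imp, and_assoc]
    tauto
  have hWo : ∀ S, IsOpen (W S) := by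
    intro S
    refine (IsOpen.inter (IsOpen.inter ?_ ?_) ?_)
    · exact isOpen_lt continuous_const (continuous_finset_sum _ fun j _ => (f j).continuous)
    · refine isOpen_iInter_of_finite fun j => ?_
      split_ifs
      · exact isOpen_lt continuous_const (f j).continuous
      · exact isOpen_univ
    · refine isOpen_iInter_of_finite fun p => ?_
      split_ifs
      · exact isOpen_lt (f p.2).continuous (f p.1).continuous
      · exact isOpen_univ
  have hWcov : ∀ y : Y, ∃ S, y ∈ W S := by
    intro y
    refine ⟨Finset.univ.filter fun k => 0 < f k y, ?_⟩
    have hj : ∃ j, 0 < f j y := by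
      by_contra hno
      push_neg at hno
      have h0 : ∑ k, f k y ≤ 0 := Finset.sum_nonpos fun k _ => hno k
      rw [hsum y] at h0; linarith
    obtain ⟨j, hj⟩ := hj
    rw [hWmem]
    refine ⟨?_, ?_, ?_⟩
    · refine lt_of_lt_of_le hj (Finset.single_le_sum (fun k _ => f.nonneg k y) ?_)
      simp [hj]
    · intro k hk; simpa using hk
    · intro k hk l hl
      simp only [Finset.mem_filter, Finset.mem_univ, true_and] at hk hl
      push_neg at hl
      exact lt_of_le_of_lt hl (by simpa using hk)
  have hWcard : ∀ S : Finset (Fin M), (W S).Nonempty → 1 ≤ S.card ∧ S.card ≤ n + 1 := by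
    intro S ⟨y, hy⟩
    rw [hWmem] at hy
    constructor
    · rcases Finset.eq_empty_or_nonempty S with h | h
      · subst h; simp at hy
      · exact Finset.card_pos.2 h
    · have hsub : (S : Set (Fin M)) ⊆ {k | y ∈ V k} := by
        intro k hk
        exact hsupp k y (ne_of_gt (hy.2.1 k (by simpa using hk)))
      calc S.card = (S : Set (Fin M)).ncard := (Set.ncard_coe_finset S).symm
        _ ≤ ({k | y ∈ V k} : Set (Fin M)).ncard := Set.ncard_le_ncard hsub (Set.toFinite _)
        _ ≤ n + 1 := hmul y
  have hWdisj : ∀ S T : Finset (Fin M), S ≠ T → S.card = T.card →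
      ∀ y : Y, y ∈ W S → y ∈ W T → False := by
    intro S T hne hcard y hyS hyT
    have hST : (S \ T).Nonempty := by
      rw [Finset.sdiff_nonempty]
      intro hsub
      exact hne (Finset.eq_of_subset_of_card_le hsub (le_of_eq hcard.symm))
    have hTS : (T \ S).Nonempty := by
      rw [Finset.sdiff_nonempty]
      intro hsub
      exact hne (Finset.eq_of_subset_of_card_le hsub (le_of_eq hcard)).symm
    obtain ⟨j, hj⟩ := hST
    obtain ⟨l, hl⟩ := hTS
    rw [Finset.mem_sdiff] at hj hl
    rw [hWmem] at hyS hyT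
    have h1 := hyS.2.2 j hj.1 l hl.2
    have h2 := hyT.2.2 l hl.1 j hj.2
    linarith
  -- second partition of unity subordinate to W
  obtain ⟨g, hg⟩ := PartitionOfUnity.exists_isSubordinate (ι := Finset (Fin M))
    isClosed_univ W hWo
    (fun y _ => Set.mem_iUnion.2 (hWcov y))
  have hgsum : ∀ y : Y, ∑ S, g S y = 1 := by
    intro y
    have := g.sum_eq_one (mem_univ y)
    rwa [finsum_eq_sum_of_fintype] at this
  have hgmem : ∀ (S : Finset (Fin M)) (y : Y), g S y ≠ 0 → y ∈ W S := fun S y hy =>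
    hg S (subset_closure (mem_support.2 hy))
  have hgzero : ∀ S : Finset (Fin M), ¬(1 ≤ S.card ∧ S.card ≤ n + 1) → ∀ y, g S y = 0 := by
    intro S hS y
    by_contra hy
    exact hS (hWcard S ⟨y, hgmem S y hy⟩)
  -- enumeration of subsets
  set r := Fintype.card (Finset (Fin M)) with hr
  set e : Fin r ≃ Finset (Fin M) := (Fintype.equivFin (Finset (Fin M))).symm with he
  refine ⟨r, fun i k => if (e k).card = (i : ℕ) + 1 then g (e k) else 0,
    fun i k => if hWk : (W (e k)).Nonempty then hWk.choose else Classical.arbitrary Y,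
    ?_, ?_, ?_, ?_⟩
  · intro i k y
    by_cases hik : (e k).card = (i : ℕ) + 1 <;> simp [hik, g.nonneg]
  · intro y
    rw [Finset.sum_comm]
    have : ∀ k : Fin r,
        (∑ i : Fin (n + 1), (if (e k).card = (i : ℕ) + 1 then g (e k) else 0) y)
          = g (e k) y := by
      intro k
      have : ∀ i : Fin (n + 1),
          ((if (e k).card = (i : ℕ) + 1 then g (e k) else 0) : C(Y, ℝ)) y
            = if (e k).card = (i : ℕ) + 1 then g (e k) y else 0 := by
        intro i
        by_cases hik : (e k).card = (i : ℕ) + 1 <;> simp [hik]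
      rw [Finset.sum_congr rfl fun i _ => this i]
      exact sum_if_card n _ _ (fun hc => hgzero (e k) hc y)
    rw [Finset.sum_congr rfl fun k _ => this k]
    exact (Equiv.sum_comp e (fun S => g S y)).trans (hgsum y)
  · intro i k k' hne y
    by_cases h1 : (e k).card = (i : ℕ) + 1
    · by_cases h2 : (e k').card = (i : ℕ) + 1
      · simp only [h1, h2, if_pos]
        by_contra hprod
        have hk : g (e k) y ≠ 0 := fun h => hprod (by simp [h])
        have hk' : g (e k') y ≠ 0 := fun h => hprod (by simp [h])
        exact hWdisj (e k) (e k') (fun h => hne (e.injective h)) (h1.trans h2.symm) y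
          (hgmem _ _ hk) (hgmem _ _ hk')
      · simp [h2]
    · simp [h1]
  · intro i k y hy
    by_cases h1 : (e k).card = (i : ℕ) + 1
    · simp only [h1, if_pos] at hy
      have hyW : y ∈ W (e k) := hgmem _ _ hy
      have hWne : (W (e k)).Nonempty := ⟨y, hyW⟩
      have hpt : (if hWk : (W (e k)).Nonempty then hWk.choose else Classical.arbitrary Y)
          ∈ W (e k) := by
        rw [dif_pos hWne]
        exact hWne.choose_spec
      rw [hWmem] at hyW
      obtain ⟨j, hj⟩ : (e k).Nonempty := by
        rcases Finset.eq_empty_or_nonempty (e k) with h | h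
        · rw [h] at hyW; simp at hyW
        · exact h
      rw [hWmem] at hpt
      exact ⟨j, hsupp j y (ne_of_gt (hyW.2.1 j hj)),
        hsupp j _ (ne_of_gt (hpt.2.1 j hj))⟩
    · simp [h1] at hy



/-- a uniform modulus for a finite family of continuous functions -/
lemma exists_delta {Y : Type*} [MetricSpace Y] [CompactSpace Y]
    (G : Finset C(Y, ℂ)) {η : ℝ} (hη : 0 < η) :
    ∃ δ > 0, ∀ g ∈ G, ∀ a b : Y, dist a b < δ → dist (g a) (g b) < η := by
  classical
  induction G using Finset.induction_on with
  | empty => exact ⟨1, one_pos, by simp⟩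
  | insert g G hg ih =>
    obtain ⟨δ1, hδ1, h1⟩ := ih
    have hu : UniformContinuous g := CompactSpace.uniformContinuous_of_continuous g.continuous
    rw [Metric.uniformContinuous_iff] at hu
    obtain ⟨δ2, hδ2, h2⟩ := hu η hη
    refine ⟨min δ1 δ2, lt_min hδ1 hδ2, ?_⟩
    intro g' hg' a b hab
    rcases Finset.mem_insert.mp hg' with h | h
    · subst h; exact h2 (lt_of_lt_of_le hab (min_le_right _ _))
    · exact h1 g' h a b (lt_of_lt_of_le hab (min_le_left _ _))


/-- The commutative content of Theorem 4.2: a unital inclusion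
`C(X) ↪ C(Y)` with `dim Y ≤ n` admits `(n+1)`-colourable finite-dimensional
factorizations through abelian algebras, with `ψ` a unital *-homomorphism. -/
theorem commutative_inclusion_dr {X Y : Type*}
    [MetricSpace X] [CompactSpace X] [MetricSpace Y] [CompactSpace Y]
    (n : ℕ) (hY : CovDimLE Y n)
    (ι : C(X, ℂ) →⋆ₐ[ℂ] C(Y, ℂ)) (hinj : Function.Injective ι)
    (F : Finset C(X, ℂ)) (ε : ℝ) (hε : 0 < ε) :
    ∃ (r : ℕ) (ψ : C(X, ℂ) →⋆ₐ[ℂ] (Fin (n + 1) → Fin r → ℂ))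
      (φ : (Fin (n + 1) → Fin r → ℂ) →ₗ[ℂ] C(Y, ℂ)),
      (∀ v, ‖φ v‖ ≤ ‖v‖) ∧
      (∀ v : Fin (n + 1) → Fin r → ℂ, (∀ i j, 0 ≤ v i j) → 0 ≤ φ v) ∧
      (∀ (i : Fin (n + 1)) (v w : Fin r → ℂ), (∀ j, v j * w j = 0) →
        φ (fun i' => if i' = i then v else 0) *
          φ (fun i' => if i' = i then w else 0) = 0) ∧
      (∀ f ∈ F, ‖φ (ψ f) - ι f‖ < ε) := by
  classical
  by_cases hYne : Nonempty Y
  swap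
  · -- Y empty
    haveI : IsEmpty Y := not_nonempty_iff.mp hYne
    haveI : Subsingleton (Fin (n + 1) → Fin 0 → ℂ) :=
      ⟨fun a b => funext fun i => funext fun k => k.elim0⟩
    refine ⟨0,
      { toFun := fun _ => 0
        map_one' := Subsingleton.elim _ _
        map_mul' := fun _ _ => Subsingleton.elim _ _
        map_zero' := Subsingleton.elim _ _
        map_add' := fun _ _ => Subsingleton.elim _ _
        commutes' := fun _ => Subsingleton.elim _ _
        map_star' := fun _ => Subsingleton.elim _ _ }, 0, ?_, ?_, ?_, ?_⟩
    · intro v; simp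
    · intro v _; simp
    · intro i v w _; simp
    · intro f _
      have : ι f = 0 := by ext y; exact isEmptyElim y
      simpa [this] using hε
  · -- Y nonempty
    haveI := hYne
    obtain ⟨δ, hδ, hδG⟩ := exists_delta (F.image ι) (half_pos hε)
    -- finite cover of Y by δ/2-balls
    obtain ⟨t, ht⟩ := isCompact_univ.elim_finite_subcover
      (fun y : Y => Metric.ball y (δ / 2)) (fun _ => Metric.isOpen_ball)
      (fun y _ => Set.mem_iUnion.2 ⟨y, Metric.mem_ball_self (by linarith)⟩)
    set et : Fin t.card ≃ t := t.equivFin.symm with het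
    set U : Fin t.card → Set Y := fun j => Metric.ball ((et j : Y)) (δ / 2) with hU
    have hUc : (⋃ j, U j) = Set.univ := by
      apply Set.eq_univ_of_univ_subset
      intro y hy
      obtain ⟨c, hc⟩ := Set.mem_iUnion₂.1 (ht (Set.mem_univ y))
      exact Set.mem_iUnion.2 ⟨et.symm ⟨c, hc.1⟩, by simpa [hU] using hc.2⟩
    obtain ⟨M, V, hVo, hVc, hVref, hmul⟩ := hY t.card U (fun _ => Metric.isOpen_ball) hUc
    obtain ⟨r, h, pt, hpos, hsum, horth, hclose⟩ := colored_pou n M V hVo hVc hmul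
    -- distance estimate: points in the same support are δ-close
    have hdist : ∀ (i : Fin (n + 1)) (k : Fin r) (y : Y), h i k y ≠ 0 →
        dist (pt i k) y < δ := by
      intro i k y hy
      obtain ⟨j, hyV, hptV⟩ := hclose i k y hy
      obtain ⟨j', hj'⟩ := hVref j
      have h1 := hj' hyV
      have h2 := hj' hptV
      rw [hU, Metric.mem_ball] at h1 h2
      calc dist (pt i k) y ≤ dist (pt i k) (et j' : Y) + dist (et j' : Y) y := dist_triangle _ _ _
        _ < δ / 2 + δ / 2 := add_lt_add h2 (by rw [dist_comm]; exact h1)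
        _ = δ := by ring
    -- complex-valued versions of the partition functions
    set hC : Fin (n + 1) → Fin r → C(Y, ℂ) := fun i k =>
      ⟨fun y => ((h i k y : ℝ) : ℂ), Complex.continuous_ofReal.comp (h i k).continuous⟩ with hhC
    refine ⟨r,
      { toFun := fun f i k => ι f (pt i k)
        map_one' := by funext i k; simp
        map_mul' := fun f g => by funext i k; simp
        map_zero' := by funext i k; simp
        map_add' := fun f g => by funext i k; simp
        commutes' := fun c => by funext i k; simp [Algebra.algebraMap_eq_smul_one]
        map_star' := fun f => by
          funext i k
          simp only [map_star]
          rfl },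
      { toFun := fun v => ∑ i, ∑ k, v i k • hC i k
        map_add' := fun v w => by
          simp only [Pi.add_apply, add_smul, Finset.sum_add_distrib]
        map_smul' := fun c v => by
          simp only [Pi.smul_apply, smul_eq_mul, RingHom.id_apply, Finset.smul_sum, smul_smul] },
      ?_, ?_, ?_, ?_⟩
    · -- norm bound
      intro v
      simp only [LinearMap.coe_mk, AddHom.coe_mk]
      rw [ContinuousMap.norm_le _ (norm_nonneg v)]
      intro y
      calc ‖(∑ i, ∑ k, v i k • hC i k) y‖ = ‖∑ i, ∑ k, v i k * ((h i k y : ℝ) : ℂ)‖ := by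
            simp [hhC]
        _ ≤ ∑ i, ∑ k, ‖v i k * ((h i k y : ℝ) : ℂ)‖ := by
            refine (norm_sum_le _ _).trans (Finset.sum_le_sum fun i _ => norm_sum_le _ _)
        _ ≤ ∑ i, ∑ k, ‖v‖ * h i k y := by
            refine Finset.sum_le_sum fun i _ => Finset.sum_le_sum fun k _ => ?_
            rw [norm_mul, Complex.norm_real, Real.norm_of_nonneg (hpos i k y)]
            refine mul_le_mul_of_nonneg_right ?_ (hpos i k y)
            exact (norm_le_pi_norm (v i) k).trans (norm_le_pi_norm v i)
        _ = ‖v‖ := by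
            simp only [← Finset.mul_sum]
            rw [hsum y, mul_one]
    · -- positivity
      intro v hv
      rw [ContinuousMap.le_def]
      intro y
      simp only [ContinuousMap.zero_apply, LinearMap.coe_mk, AddHom.coe_mk]
      have : (∑ i, ∑ k, v i k • hC i k) y = ∑ i, ∑ k, v i k * ((h i k y : ℝ) : ℂ) := by
        simp [hhC]
      rw [this]
      refine Finset.sum_nonneg fun i _ => Finset.sum_nonneg fun k _ => ?_
      exact mul_nonneg (hv i k) (Complex.zero_le_real.2 (hpos i k y))
    · -- order zero in each colour
      intro i v w hvw
      simp only [LinearMap.coe_mk, AddHom.coe_mk]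
      have hcollapse : ∀ (u : Fin r → ℂ),
          (∑ i' : Fin (n + 1), ∑ k, (if i' = i then u else (0 : Fin r → ℂ)) k • hC i' k)
            = ∑ k, u k • hC i k := by
        intro u
        rw [Finset.sum_eq_single i]
        · simp
        · intro i' _ hi'; simp [hi']
        · intro hmem; exact absurd (Finset.mem_univ i) hmem
      rw [hcollapse v, hcollapse w]
      ext y
      simp only [ContinuousMap.mul_apply, ContinuousMap.zero_apply]
      have hev : ∀ (u : Fin r → ℂ), (∑ k, u k • hC i k) y = ∑ k, u k * ((h i k y : ℝ) : ℂ) := by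
        intro u; simp [hhC]
      rw [hev v, hev w, Finset.sum_mul_sum]
      refine Finset.sum_eq_zero fun k _ => Finset.sum_eq_zero fun k' _ => ?_
      by_cases hkk' : k = k'
      · subst hkk'
        rw [show v k * ((h i k y : ℝ) : ℂ) * (w k * ((h i k y : ℝ) : ℂ))
            = (v k * w k) * (((h i k y : ℝ) : ℂ) * ((h i k y : ℝ) : ℂ)) by ring, hvw k, zero_mul]
      · have : h i k y * h i k' y = 0 := horth i k k' hkk' y
        rw [show v k * ((h i k y : ℝ) : ℂ) * (w k' * ((h i k' y : ℝ) : ℂ))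
            = (v k * w k') * (((h i k y * h i k' y : ℝ) : ℂ)) by push_cast; ring, this]
        simp
    · -- approximation
      intro f hf
      refine lt_of_le_of_lt (b := ε / 2) ?_ (by linarith)
      rw [ContinuousMap.norm_le _ (by linarith)]
      intro y
      simp only [LinearMap.coe_mk, AddHom.coe_mk, StarAlgHom.coe_mk, ContinuousMap.sub_apply]
      have hval : (∑ i, ∑ k, (fun (i : Fin (n+1)) (k : Fin r) => ι f (pt i k)) i k • hC i k) y
          = ∑ i, ∑ k, ι f (pt i k) * ((h i k y : ℝ) : ℂ) := by
        simp [hhC]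
      have hone : (1 : ℂ) = ∑ i, ∑ k, ((h i k y : ℝ) : ℂ) := by
        rw [show (1 : ℂ) = ((1 : ℝ) : ℂ) by norm_num, ← hsum y]
        push_cast
        ring
      calc ‖(∑ i, ∑ k, (fun (i : Fin (n+1)) (k : Fin r) => ι f (pt i k)) i k • hC i k) y - ι f y‖
          = ‖∑ i, ∑ k, (ι f (pt i k) - ι f y) * ((h i k y : ℝ) : ℂ)‖ := by
            have key : ∑ i, ∑ k, (ι f (pt i k) - ι f y) * ((h i k y : ℝ) : ℂ)
                = (∑ i, ∑ k, ι f (pt i k) * ((h i k y : ℝ) : ℂ)) - ι f y := by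
              simp only [sub_mul, Finset.sum_sub_distrib, ← Finset.mul_sum, ← hone, mul_one]
            rw [hval, ← key]
        _ ≤ ∑ i, ∑ k, ‖(ι f (pt i k) - ι f y) * ((h i k y : ℝ) : ℂ)‖ :=
            (norm_sum_le _ _).trans (Finset.sum_le_sum fun i _ => norm_sum_le _ _)
        _ ≤ ∑ i, ∑ k, (ε / 2) * h i k y := by
            refine Finset.sum_le_sum fun i _ => Finset.sum_le_sum fun k _ => ?_
            rw [norm_mul, Complex.norm_real, Real.norm_of_nonneg (hpos i k y)]
            by_cases hzero : h i k y = 0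
            · rw [hzero]; simp
            · refine mul_le_mul_of_nonneg_right ?_ (hpos i k y)
              have := hδG (ι f) (Finset.mem_image_of_mem ι hf) (pt i k) y (hdist i k y hzero)
              rw [dist_eq_norm] at this
              exact le_of_lt this
        _ = ε / 2 := by
            simp only [← Finset.mul_sum]
            rw [hsum y, mul_one]
end
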